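/- arXiv:0902.1119 — 2 statements merged into one kernel-verified Lean document; each statement's English description precedes it below -/
import Mathlib

section
/- Let Λ be a ring, n a positive integer, and let H^n_Λ denote the class of left Λ-modules M of projective dimension n admitting a projective resolution by finitely generated projective modules and satisfying Ext^i_Λ(M,Λ) = 0 for all i ≠ n. If 0 → A → B → C → 0 is a short exact sequence of Λ-modules with A and C in H^n_Λ, then B is in H^n_Λ. -/
open CategoryTheory

noncomputable section

set_option synthInstance.maxHeartbeats 400000
set_option maxHeartbeats 1000000
attribute [local instance] HasDerivedCategory.standard
attribute [local instance] CategoryTheory.hasExt_of_hasDerivedCategory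

/-- `M` admits a projective resolution all of whose terms are finitely generated. -/
def HasFGProjRes (Λ : Type) [Ring Λ] (M : ModuleCat.{0} Λ) : Prop :=
  ∃ P : CategoryTheory.ProjectiveResolution M, ∀ i : ℕ, Module.Finite Λ (P.complex.X i)

/-- Membership in the subcategory `H^n_Λ` of `Mod Λ`: `M` has projective dimension exactly
`n` (expressed via vanishing of `Ext^i(M,-)` for `i > n` and non-vanishing of some
`Ext^n(M,N)`), admits a projective resolution by finitely generated modules, and
`Ext^i_Λ(M,Λ) = 0` for all `i ≠ n`. -/
structure MemH (Λ : Type) [Ring Λ] (n : ℕ) (M : ModuleCat.{0} Λ) : Prop where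
  pd_le : ∀ (N : ModuleCat.{0} Λ) (i : ℕ), n < i → Subsingleton (Abelian.Ext M N i)
  pd_ge : ∃ N : ModuleCat.{0} Λ, Nontrivial (Abelian.Ext M N n)
  fg_res : HasFGProjRes Λ M
  gorenstein : ∀ i : ℕ, i ≠ n → Subsingleton (Abelian.Ext M (ModuleCat.of Λ Λ) i)

/-- The ring `Λ` has (left) global dimension exactly `n`. -/
def GlobalDimEq (Λ : Type) [Ring Λ] (n : ℕ) : Prop :=
  (∀ (M N : ModuleCat.{0} Λ) (i : ℕ), n < i → Subsingleton (Abelian.Ext M N i)) ∧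
    ∃ M N : ModuleCat.{0} Λ, Nontrivial (Abelian.Ext M N n)


section HorseshoeAuxSec
open CategoryTheory.Limits CategoryTheory.Abelian

namespace HorseshoeAux

open HomologicalComplex

variable {C : Type*} [Category C] [Abelian C]

open HomologySequence ComposableArrows in
lemma quasiIso_τ₂' {S₁ S₂ : ShortComplex (ChainComplex C ℕ)} (φ : S₁ ⟶ S₂)
    (hS₁ : S₁.ShortExact) (hS₂ : S₂.ShortExact)
    (h₁ : QuasiIso φ.τ₁) (h₃ : QuasiIso φ.τ₃) : QuasiIso φ.τ₂ := by
  have H₁ : ∀ i, IsIso (homologyMap φ.τ₁ i) := fun i => by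
    rw [← quasiIsoAt_iff_isIso_homologyMap]; infer_instance
  have H₃ : ∀ i, IsIso (homologyMap φ.τ₃ i) := fun i => by
    rw [← quasiIsoAt_iff_isIso_homologyMap]; infer_instance
  rw [quasiIso_iff]
  intro i
  rw [quasiIsoAt_iff_isIso_homologyMap]
  have rel : ∀ j : ℕ, (ComplexShape.down ℕ).Rel (j+1) j := fun j => by simp
  have mono : Mono (homologyMap φ.τ₂ i) := by
    apply mono_of_epi_of_mono_of_mono
      ((δ₀Functor ⋙ δ₀Functor).map (mapComposableArrows₅ φ hS₁ hS₂ (i+1) i (rel i)))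
    · exact (composableArrows₅_exact hS₁ (i+1) i (rel i)).δ₀.δ₀
    · exact (composableArrows₅_exact hS₂ (i+1) i (rel i)).δ₀.δ₀
    · have := H₃ (i+1); exact (inferInstance : Epi (homologyMap φ.τ₃ (i+1)))
    · have := H₁ i; exact (inferInstance : Mono (homologyMap φ.τ₁ i))
    · have := H₃ i; exact (inferInstance : Mono (homologyMap φ.τ₃ i))
  have epi : Epi (homologyMap φ.τ₂ i) := by
    obtain _ | j := i
    · apply epi_of_epi_of_epi_of_epi (mapComposableArrows₂ φ 0)
      · exact composableArrows₂_exact hS₂ 0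
      · have := hS₁.epi_g
        exact epi_homologyMap_of_epi_of_not_rel S₁.g 0 (by simp)
      · have := H₁ 0; exact (inferInstance : Epi (homologyMap φ.τ₁ 0))
      · have := H₃ 0; exact (inferInstance : Epi (homologyMap φ.τ₃ 0))
    · apply epi_of_epi_of_epi_of_mono
        ((δlastFunctor ⋙ δlastFunctor).map (mapComposableArrows₅ φ hS₁ hS₂ (j+1) j (rel j)))
      · exact (composableArrows₅_exact hS₁ (j+1) j (rel j)).δlast.δlast
      · exact (composableArrows₅_exact hS₂ (j+1) j (rel j)).δlast.δlast
      · have := H₁ (j+1); exact (inferInstance : Epi (homologyMap φ.τ₁ (j+1)))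
      · have := H₃ (j+1); exact (inferInstance : Epi (homologyMap φ.τ₃ (j+1)))
      · have := H₁ j; exact (inferInstance : Mono (homologyMap φ.τ₁ j))
  exact isIso_of_mono_of_epi _

/-- augmentation of a projective resolution -/
def aug {Z : C} (R : ProjectiveResolution Z) : R.complex.X 0 ⟶ Z := R.π.f 0

lemma d_aug {Z : C} (R : ProjectiveResolution Z) : R.complex.d 1 0 ≫ aug R = 0 :=
  R.complex_d_comp_π_f_zero

lemma exact_aug₀ {Z : C} (R : ProjectiveResolution Z) :
    (ShortComplex.mk (R.complex.d 1 0) (aug R) (d_aug R)).Exact := R.exact₀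

instance {Z : C} (R : ProjectiveResolution Z) : Epi (aug R) := by
  exact (inferInstance : Epi (R.π.f 0))

variable {S : ShortComplex C} (hS : S.ShortExact)
variable (P : ProjectiveResolution S.X₁) (Q : ProjectiveResolution S.X₃)

/-- lift of the augmentation of Q along S.g -/
def sigma : Q.complex.X 0 ⟶ S.X₂ :=
  have := hS.epi_g
  Projective.factorThru (aug Q) S.g

lemma sigma_g : sigma hS Q ≫ S.g = aug Q := by
  have := hS.epi_g
  apply Projective.factorThru_comp

lemma hu₀ : (-(Q.complex.d 1 0 ≫ sigma hS Q)) ≫ S.g = 0 := by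
  rw [Preadditive.neg_comp, Category.assoc, sigma_g, d_aug, neg_zero]

/-- lift through S.f -/
def v₀ : Q.complex.X 1 ⟶ S.X₁ :=
  hS.exact.liftFromProjective (-(Q.complex.d 1 0 ≫ sigma hS Q)) (hu₀ hS Q)

lemma v₀_f : v₀ hS Q ≫ S.f = -(Q.complex.d 1 0 ≫ sigma hS Q) :=
  ShortComplex.Exact.liftFromProjective_comp _ _ _

/-- θ₀ -/
def theta₀ : Q.complex.X 1 ⟶ P.complex.X 0 :=
  Projective.factorThru (v₀ hS Q) (aug P)

lemma theta₀_aug : theta₀ hS P Q ≫ aug P = v₀ hS Q :=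
  Projective.factorThru_comp _ _

lemma dQ_v₀ : Q.complex.d 2 1 ≫ v₀ hS Q = 0 := by
  have := hS.mono_f
  rw [← cancel_mono S.f, Category.assoc, v₀_f, zero_comp]
  simp

def thetaData : ∀ i : ℕ,
    Σ' (t : Q.complex.X (i+1) ⟶ P.complex.X i) (t' : Q.complex.X (i+2) ⟶ P.complex.X (i+1)),
      t' ≫ P.complex.d (i+1) i = -(Q.complex.d (i+2) (i+1) ≫ t)
  | 0 => ⟨theta₀ hS P Q,
      (exact_aug₀ P).liftFromProjective (-(Q.complex.d 2 1 ≫ theta₀ hS P Q)) (by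
        have : (-(Q.complex.d 2 1 ≫ theta₀ hS P Q)) ≫ aug P = 0 := by
          rw [Preadditive.neg_comp, Category.assoc, theta₀_aug, dQ_v₀, neg_zero]
        exact this),
      ShortComplex.Exact.liftFromProjective_comp _ _ _⟩
  | (i+1) =>
      let prev := thetaData i
      ⟨prev.2.1,
        (P.exact_succ i).liftFromProjective (-(Q.complex.d (i+3) (i+2) ≫ prev.2.1)) (by
          have : (-(Q.complex.d (i+3) (i+2) ≫ prev.2.1)) ≫ P.complex.d (i+1) i = 0 := by
            rw [Preadditive.neg_comp, Category.assoc, prev.2.2]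
            simp
          exact this),
        ShortComplex.Exact.liftFromProjective_comp _ _ _⟩

/-- the connecting maps in the horseshoe differential -/
def theta (i : ℕ) : Q.complex.X (i+1) ⟶ P.complex.X i := (thetaData hS P Q i).1

lemma theta_zero : theta hS P Q 0 = theta₀ hS P Q := rfl

lemma theta_succ (i : ℕ) :
    theta hS P Q (i+1) ≫ P.complex.d (i+1) i = -(Q.complex.d (i+2) (i+1) ≫ theta hS P Q i) :=
  (thetaData hS P Q i).2.2

lemma theta_zero_aug :
    theta hS P Q 0 ≫ aug P ≫ S.f = -(Q.complex.d 1 0 ≫ sigma hS Q) := by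
  rw [theta_zero, ← Category.assoc, theta₀_aug, v₀_f]


/-- the middle complex of the horseshoe -/
abbrev hsComplex : ChainComplex C ℕ :=
  ChainComplex.of (fun i => P.complex.X i ⊞ Q.complex.X i)
    (fun i => biprod.desc (P.complex.d (i+1) i ≫ biprod.inl)
      (theta hS P Q i ≫ biprod.inl + Q.complex.d (i+1) i ≫ biprod.inr))
    (fun i => by
      apply biprod.hom_ext'
      · simp
      · simp only [biprod.inr_desc_assoc, Preadditive.add_comp, Category.assoc,
          biprod.inl_desc, biprod.inr_desc, comp_zero]
        rw [← Category.assoc (theta hS P Q (i+1)), theta_succ]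
        simp [Preadditive.comp_add])

lemma hsComplex_d (i : ℕ) : (hsComplex hS P Q).d (i+1) i =
    biprod.desc (P.complex.d (i+1) i ≫ biprod.inl)
      (theta hS P Q i ≫ biprod.inl + Q.complex.d (i+1) i ≫ biprod.inr) :=
  by unfold hsComplex; exact ChainComplex.of_d (fun i => P.complex.X i ⊞ Q.complex.X i)
      (fun i => biprod.desc (P.complex.d (i+1) i ≫ biprod.inl)
        (theta hS P Q i ≫ biprod.inl + Q.complex.d (i+1) i ≫ biprod.inr)) i

instance (i : ℕ) : Projective ((hsComplex hS P Q).X i) :=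
  inferInstanceAs (Projective (P.complex.X i ⊞ Q.complex.X i))

/-- augmentation of the middle complex -/
def hsAug : (hsComplex hS P Q).X 0 ⟶ S.X₂ := biprod.desc (aug P ≫ S.f) (sigma hS Q)

lemma hs_d_aug : (hsComplex hS P Q).d 1 0 ≫ hsAug hS P Q = 0 := by
  rw [hsComplex_d]
  apply biprod.hom_ext'
  · simp only [biprod.inl_desc_assoc, Category.assoc, comp_zero]
    rw [hsAug, biprod.inl_desc, ← Category.assoc, d_aug]
    simp
  · simp only [biprod.inr_desc_assoc, Preadditive.add_comp, Category.assoc, comp_zero]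
    rw [hsAug, biprod.inl_desc, biprod.inr_desc]
    rw [theta_zero_aug]
    exact neg_add_cancel _

/-- the chain map to the single complex -/
def hsπ : hsComplex hS P Q ⟶ (ChainComplex.single₀ C).obj S.X₂ :=
  (ChainComplex.toSingle₀Equiv _ _).symm ⟨hsAug hS P Q, hs_d_aug hS P Q⟩

lemma hsπ_f_zero : (hsπ hS P Q).f 0 = hsAug hS P Q :=
  ChainComplex.toSingle₀Equiv_symm_apply_f_zero _ _

/-- the inclusion chain map -/
def hsInl : P.complex ⟶ hsComplex hS P Q where
  f i := biprod.inl
  comm' i j hij := by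
    obtain rfl : j + 1 = i := hij
    rw [hsComplex_d]
    simp

/-- the projection chain map -/
def hsSnd : hsComplex hS P Q ⟶ Q.complex where
  f i := biprod.snd
  comm' i j hij := by
    obtain rfl : j + 1 = i := hij
    rw [hsComplex_d]
    apply biprod.hom_ext'
    · simp
    · simp

/-- the short exact sequence of complexes -/
def hsSES : ShortComplex (ChainComplex C ℕ) :=
  ShortComplex.mk (hsInl hS P Q) (hsSnd hS P Q) (by
    ext i
    simp [hsInl, hsSnd])

lemma hsSES_shortExact : (hsSES hS P Q).ShortExact := by
  rw [HomologicalComplex.shortExact_iff_degreewise_shortExact]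
  intro i
  exact ShortComplex.Splitting.shortExact
    { r := biprod.fst
      s := biprod.inr
      f_r := by simp [hsSES, hsInl, hsSnd]; exact biprod.inl_fst
      s_g := by simp [hsSES, hsInl, hsSnd]; exact biprod.inr_snd
      id := by exact biprod.total }


/-- the short complex of single complexes -/
def singleSES (S : ShortComplex C) : ShortComplex (ChainComplex C ℕ) :=
  ShortComplex.mk ((ChainComplex.single₀ C).map S.f) ((ChainComplex.single₀ C).map S.g)
    (by rw [← Functor.map_comp, S.zero, Functor.map_zero])

include hS in
lemma singleSES_shortExact : (singleSES S).ShortExact := by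
  rw [shortExact_iff_degreewise_shortExact]
  intro i
  match i with
  | 0 =>
    refine ShortComplex.shortExact_of_iso ?_ hS
    refine ShortComplex.isoMk (Iso.refl _) (Iso.refl _) (Iso.refl _) ?_ ?_
    · dsimp [singleSES]
      erw [Category.id_comp, Category.comp_id]; exact ChainComplex.single₀_map_f_zero _
    · dsimp [singleSES]
      erw [Category.id_comp, Category.comp_id]; exact ChainComplex.single₀_map_f_zero _
  | (n+1) =>
    have h₁ : IsZero (((ChainComplex.single₀ C).obj S.X₁).X (n+1)) :=
      HomologicalComplex.isZero_single_obj_X _ 0 _ _ (by simp)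
    have h₂ : IsZero (((ChainComplex.single₀ C).obj S.X₂).X (n+1)) :=
      HomologicalComplex.isZero_single_obj_X _ 0 _ _ (by simp)
    have h₃ : IsZero (((ChainComplex.single₀ C).obj S.X₃).X (n+1)) :=
      HomologicalComplex.isZero_single_obj_X _ 0 _ _ (by simp)
    refine ShortComplex.ShortExact.mk' (ShortComplex.exact_of_isZero_X₂ _ h₂)
      ⟨fun _ _ _ => h₁.eq_of_tgt _ _⟩ ⟨fun _ _ _ => h₃.eq_of_src _ _⟩

/-- the morphism of short exact sequences of complexes -/
def hsφ : hsSES hS P Q ⟶ singleSES S where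
  τ₁ := P.π
  τ₂ := hsπ hS P Q
  τ₃ := Q.π
  comm₁₂ := by
    ext n
    match n with
    | 0 =>
      dsimp [hsSES, singleSES, hsInl]
      rw [hsπ_f_zero, ChainComplex.single₀_map_f_zero]
      dsimp [hsAug]
      rw [biprod.inl_desc]
      rfl
    | (n+1) =>
      apply (HomologicalComplex.isZero_single_obj_X (ComplexShape.down ℕ) 0 S.X₂ (n+1)
        (by simp)).eq_of_tgt
  comm₂₃ := by
    ext n
    match n with
    | 0 =>
      dsimp [hsSES, singleSES, hsSnd]
      rw [hsπ_f_zero, ChainComplex.single₀_map_f_zero]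
      dsimp [hsAug]
      apply biprod.hom_ext'
      · rw [biprod.inl_desc_assoc, Category.assoc, S.zero, comp_zero]
        erw [← Category.assoc biprod.inl biprod.snd, biprod.inl_snd, zero_comp]
      · rw [biprod.inr_desc_assoc, sigma_g]
        erw [← Category.assoc biprod.inr biprod.snd, biprod.inr_snd, Category.id_comp]
        rfl
    | (n+1) =>
      apply (HomologicalComplex.isZero_single_obj_X (ComplexShape.down ℕ) 0 S.X₃ (n+1)
        (by simp)).eq_of_tgt

instance hsπ_quasiIso : QuasiIso (hsπ hS P Q) :=
  quasiIso_τ₂' (hsφ hS P Q) (hsSES_shortExact hS P Q) (singleSES_shortExact hS)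
    P.quasiIso Q.quasiIso

/-- the horseshoe resolution -/
def hsResolution : ProjectiveResolution S.X₂ where
  complex := hsComplex hS P Q
  π := hsπ hS P Q
  quasiIso := hsπ_quasiIso hS P Q


section ModuleFG

variable {Λ : Type} [Ring Λ]

lemma hasFGProjRes_middle (S : ShortComplex (ModuleCat.{0} Λ)) (hS : S.ShortExact)
    (h₁ : HasFGProjRes Λ S.X₁) (h₃ : HasFGProjRes Λ S.X₃) :
    HasFGProjRes Λ S.X₂ := by
  obtain ⟨P, hP⟩ := h₁
  obtain ⟨Q, hQ⟩ := h₃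
  refine ⟨hsResolution hS P Q, fun i => ?_⟩
  have := hP i
  have := hQ i
  have e : (ModuleCat.of Λ ((P.complex.X i) × (Q.complex.X i))) ≅
      ((hsResolution hS P Q).complex.X i) :=
    (ModuleCat.biprodIsoProd (P.complex.X i) (Q.complex.X i)).symm
  have : Module.Finite Λ ((P.complex.X i) × (Q.complex.X i)) := Module.Finite.prod
  have : Module.Finite Λ ↑(ModuleCat.of Λ ((P.complex.X i) × (Q.complex.X i))) := this
  exact Module.Finite.equiv e.toLinearEquiv

end ModuleFG


section ExtChase

variable {Λ : Type} [Ring Λ]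

open Abelian in
lemma ext_subsingleton_middle (S : ShortComplex (ModuleCat.{0} Λ)) (hS : S.ShortExact)
    (N : ModuleCat.{0} Λ) (i : ℕ) (h₁ : Subsingleton (Abelian.Ext S.X₁ N i))
    (h₃ : Subsingleton (Abelian.Ext S.X₃ N i)) :
    Subsingleton (Abelian.Ext S.X₂ N i) := by
  refine subsingleton_of_forall_eq 0 fun z => ?_
  obtain ⟨x₁, hx₁⟩ := Ext.contravariant_sequence_exact₂ hS N z (Subsingleton.elim _ _)
  rw [← hx₁, Subsingleton.elim x₁ 0, Ext.comp_zero]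

end ExtChase


end HorseshoeAux

end HorseshoeAuxSec

open HorseshoeAux in

/-- `H^n_Λ` is closed under extensions: if `0 → A → B → C → 0` is a short
exact sequence of left `Λ`-modules with `A` and `C` in `H^n_Λ`, then `B` is in `H^n_Λ`. -/
theorem closed_under_extensions (Λ : Type) [Ring Λ] (n : ℕ) (hn : 0 < n)
    (S : ShortComplex (ModuleCat.{0} Λ)) (hS : S.ShortExact)
    (hA : MemH Λ n S.X₁) (hC : MemH Λ n S.X₃) :
    MemH Λ n S.X₂ := by
  constructor
  · intro N i hi
    exact ext_subsingleton_middle S hS N i (hA.pd_le N i hi) (hC.pd_le N i hi)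
  · obtain ⟨N, x, y, hxy⟩ := hA.pd_ge
    have hx : x - y ≠ 0 := sub_ne_zero.mpr hxy
    have hcls : hS.extClass.comp (x - y) (show 1 + n = n + 1 by omega) = 0 := by
      have := hC.pd_le N (n+1) (by omega)
      exact Subsingleton.elim _ _
    obtain ⟨x₂, hx₂⟩ := Abelian.Ext.contravariant_sequence_exact₁ hS N (x - y)
      (show 1 + n = n + 1 by omega) hcls
    refine ⟨N, nontrivial_of_ne x₂ 0 fun h => hx ?_⟩
    rw [← hx₂, h, Abelian.Ext.comp_zero]
  · exact hasFGProjRes_middle S hS hA.fg_res hC.fg_res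
  · intro i hi
    exact ext_subsingleton_middle S hS _ i (hA.gorenstein i hi) (hC.gorenstein i hi)

end
end

section
/- Let Λ be a semiperfect left Noetherian ring, n ≥ 1, and let S^n denote the set of simple left Λ-modules belonging to H^n_Λ. Define t^n(M) as the sum of all submodules of M of finite length whose composition factors all lie in S^n. Then for every left Λ-module M, t^n(M/t^n(M)) = 0; that is, t^n is a radical. -/
open CategoryTheory

noncomputable section

set_option synthInstance.maxHeartbeats 400000
set_option maxHeartbeats 1000000
attribute [local instance] HasDerivedCategory.standard
attribute [local instance] CategoryTheory.hasExt_of_hasDerivedCategory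

section Torsion

variable (Λ : Type) [Ring Λ] (n : ℕ)

/-- A module of finite length all of whose composition factors lie in `S^n`, the class of
simple modules belonging to `H^n_Λ`: it has finite length and every simple subquotient
lies in `H^n_Λ`. -/
def FactorsInH (N : Type) [AddCommGroup N] [Module Λ N] : Prop :=
  IsFiniteLength Λ N ∧
    ∀ (L₁ L₂ : Submodule Λ N), L₁ ≤ L₂ →
      ∀ _ : IsSimpleModule Λ (L₂ ⧸ Submodule.comap L₂.subtype L₁),
        MemH Λ n (ModuleCat.of Λ (L₂ ⧸ Submodule.comap L₂.subtype L₁))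

/-- The torsion submodule `t^n(M)`: the sum of all submodules of finite length with all
composition factors in `S^n`. -/
def tSub (M : Type) [AddCommGroup M] [Module Λ M] : Submodule Λ M :=
  sSup {L : Submodule Λ M | FactorsInH Λ n L}

end Torsion

section Semiperfect

variable (Λ : Type) [Ring Λ]

/-- `M` has a projective cover: a projective module mapping onto `M` with superfluous
kernel. -/
def HasProjCover (M : ModuleCat.{0} Λ) : Prop :=
  ∃ (P : ModuleCat.{0} Λ) (π : P ⟶ M), CategoryTheory.Projective P ∧
    Function.Surjective π ∧
    ∀ N : Submodule Λ P, N ⊔ LinearMap.ker π.hom = ⊤ → N = ⊤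

/-- `Λ` is semiperfect: every simple left `Λ`-module has a projective cover. -/
def IsSemiperfectRing : Prop :=
  ∀ M : ModuleCat.{0} Λ, IsSimpleModule Λ M → HasProjCover Λ M

end Semiperfect

section Aux

open Abelian

variable {Λ : Type} [Ring Λ] {n : ℕ}

lemma extIsoCancel₁ {X X' Y : ModuleCat.{0} Λ} (e : X ≅ X') {i : ℕ} (a : Abelian.Ext X' Y i) :
    (Ext.mk₀ e.inv).comp ((Ext.mk₀ e.hom).comp a (zero_add i)) (zero_add i) = a := by
  rw [Ext.mk₀_comp_mk₀_assoc, Iso.inv_hom_id, Ext.mk₀_id_comp]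

lemma extIsoCancel₂ {X X' Y : ModuleCat.{0} Λ} (e : X ≅ X') {i : ℕ} (a : Abelian.Ext X Y i) :
    (Ext.mk₀ e.hom).comp ((Ext.mk₀ e.inv).comp a (zero_add i)) (zero_add i) = a := by
  rw [Ext.mk₀_comp_mk₀_assoc, Iso.hom_inv_id, Ext.mk₀_id_comp]

lemma subsingleton_ext_congr {X X' Y : ModuleCat.{0} Λ} (e : X ≅ X') {i : ℕ}
    (h : Subsingleton (Abelian.Ext X Y i)) : Subsingleton (Abelian.Ext X' Y i) := by
  haveI := h
  refine ⟨fun a b => ?_⟩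
  rw [← extIsoCancel₁ e a, ← extIsoCancel₁ e b,
    Subsingleton.elim ((Ext.mk₀ e.hom).comp a (zero_add i)) ((Ext.mk₀ e.hom).comp b (zero_add i))]

lemma nontrivial_ext_congr {X X' Y : ModuleCat.{0} Λ} (e : X ≅ X') {i : ℕ}
    (h : Nontrivial (Abelian.Ext X Y i)) : Nontrivial (Abelian.Ext X' Y i) := by
  obtain ⟨a, b, hab⟩ := h
  refine ⟨(Ext.mk₀ e.inv).comp a (zero_add i), (Ext.mk₀ e.inv).comp b (zero_add i),
    fun hc => hab ?_⟩
  have h2 := congrArg (fun z : Abelian.Ext X' Y i => (Ext.mk₀ e.hom).comp z (zero_add i)) hc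
  simpa only [extIsoCancel₂ e] using h2

lemma hasFGProjRes_congr {X X' : ModuleCat.{0} Λ} (e : X ≅ X') (h : HasFGProjRes Λ X) :
    HasFGProjRes Λ X' := by
  obtain ⟨P, hP⟩ := h
  haveI := P.hasHomology
  haveI : QuasiIso P.π := P.quasiIso
  exact ⟨{ complex := P.complex
           projective := P.projective
           hasHomology := P.hasHomology
           π := P.π ≫ (ChainComplex.single₀ (ModuleCat.{0} Λ)).map e.hom
           quasiIso := inferInstance }, hP⟩

lemma memH_congr {M N : Type} [AddCommGroup M] [Module Λ M] [AddCommGroup N] [Module Λ N]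
    (e : M ≃ₗ[Λ] N) (h : MemH Λ n (ModuleCat.of Λ M)) : MemH Λ n (ModuleCat.of Λ N) := by
  let i : ModuleCat.of Λ M ≅ ModuleCat.of Λ N := e.toModuleIso
  refine ⟨fun P k hk => subsingleton_ext_congr i (h.pd_le P k hk), ?_,
    hasFGProjRes_congr i h.fg_res, fun k hk => subsingleton_ext_congr i (h.gorenstein k hk)⟩
  obtain ⟨P, hP⟩ := h.pd_ge
  exact ⟨P, nontrivial_ext_congr i hP⟩

/-- An auxiliary reformulation of `FactorsInH`: `N` has finite length and every simple
module that is an epimorphic image of a submodule of `N` lies in `H^n`. -/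
def FIH (Λ : Type) [Ring Λ] (n : ℕ) (N : Type) [AddCommGroup N] [Module Λ N] : Prop :=
  IsFiniteLength Λ N ∧
    ∀ (Q : Type) [AddCommGroup Q] [Module Λ Q], IsSimpleModule Λ Q →
      (∃ (p : Submodule Λ N) (f : ↥p →ₗ[Λ] Q), Function.Surjective f) →
      MemH Λ n (ModuleCat.of Λ Q)

lemma false_of_simple_subsingleton {Q : Type} [AddCommGroup Q] [Module Λ Q] [Subsingleton Q]
    (hQ : IsSimpleModule Λ Q) : False := by
  haveI := hQ
  haveI : Subsingleton (Submodule Λ Q) := (Submodule.subsingleton_iff Λ).2 ‹_›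
  exact (bot_ne_top : (⊥ : Submodule Λ Q) ≠ ⊤) (Subsingleton.elim _ _)

lemma not_simple_of_subsingleton {P Q : Type} [AddCommGroup P] [Module Λ P] [AddCommGroup Q]
    [Module Λ Q] [Subsingleton P] (f : P →ₗ[Λ] Q) (hf : Function.Surjective f)
    (hQ : IsSimpleModule Λ Q) : False := by
  haveI : Subsingleton Q := hf.subsingleton
  exact false_of_simple_subsingleton hQ

lemma fih_of_subsingleton {N : Type} [AddCommGroup N] [Module Λ N] [Subsingleton N] :
    FIH Λ n N := by
  refine ⟨.of_subsingleton, ?_⟩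
  intro Q _ _ hQ hre
  obtain ⟨p, f, hf⟩ := hre
  exact (not_simple_of_subsingleton f hf hQ).elim

lemma FIH.of_injective {M N : Type} [AddCommGroup M] [Module Λ M] [AddCommGroup N] [Module Λ N]
    (h : FIH Λ n N) (f : M →ₗ[Λ] N) (hf : Function.Injective f) : FIH Λ n M := by
  obtain ⟨hlen, hQ⟩ := h
  rw [isFiniteLength_iff_isNoetherian_isArtinian] at hlen
  haveI := hlen.1; haveI := hlen.2
  refine ⟨by
    rw [isFiniteLength_iff_isNoetherian_isArtinian]
    exact ⟨isNoetherian_of_injective f hf, isArtinian_of_injective f hf⟩, ?_⟩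
  intro Q _ _ hs hre
  obtain ⟨p, g, hg⟩ := hre
  refine hQ Q hs ⟨p.map f, g ∘ₗ (Submodule.equivMapOfInjective f hf p).symm.toLinearMap, ?_⟩
  rw [LinearMap.coe_comp, LinearEquiv.coe_coe]
  exact hg.comp (Submodule.equivMapOfInjective f hf p).symm.surjective

lemma FIH.of_surjective {N M : Type} [AddCommGroup M] [Module Λ M] [AddCommGroup N] [Module Λ N]
    (h : FIH Λ n N) (f : N →ₗ[Λ] M) (hf : Function.Surjective f) : FIH Λ n M := by
  obtain ⟨hlen, hQ⟩ := h
  rw [isFiniteLength_iff_isNoetherian_isArtinian] at hlen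
  haveI := hlen.1; haveI := hlen.2
  refine ⟨by
    rw [isFiniteLength_iff_isNoetherian_isArtinian]
    exact ⟨isNoetherian_of_surjective f (LinearMap.range_eq_top.2 hf),
      isArtinian_of_surjective _ f hf⟩, ?_⟩
  intro Q _ _ hs hre
  obtain ⟨p, g, hg⟩ := hre
  refine hQ Q hs ⟨p.comap f, g ∘ₗ f.restrict (p := p.comap f) (q := p) (fun x hx => hx), ?_⟩
  rw [LinearMap.coe_comp]
  refine hg.comp ?_
  rintro ⟨y, hy⟩
  obtain ⟨x, rfl⟩ := hf y
  exact ⟨⟨x, hy⟩, by ext; simp [LinearMap.restrict_apply]⟩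

lemma FIH.extension {N : Type} [AddCommGroup N] [Module Λ N] (p : Submodule Λ N)
    (h1 : FIH Λ n ↥p) (h2 : FIH Λ n (N ⧸ p)) : FIH Λ n N := by
  obtain ⟨hl1, hq1⟩ := h1
  obtain ⟨hl2, hq2⟩ := h2
  rw [isFiniteLength_iff_isNoetherian_isArtinian] at hl1 hl2
  haveI := hl1.1; haveI := hl1.2; haveI := hl2.1; haveI := hl2.2
  have hrk : LinearMap.range p.subtype = LinearMap.ker p.mkQ := by
    rw [Submodule.range_subtype, Submodule.ker_mkQ]
  refine ⟨by
    rw [isFiniteLength_iff_isNoetherian_isArtinian]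
    exact ⟨isNoetherian_of_range_eq_ker p.subtype p.mkQ hrk,
      isArtinian_of_range_eq_ker p.subtype p.mkQ hrk⟩, ?_⟩
  intro Q _ _ hs hre
  obtain ⟨q, g, hg⟩ := hre
  haveI := hs
  rcases eq_bot_or_eq_top (Submodule.map g (Submodule.comap q.subtype p)) with hK | hK
  · -- `g` kills `q ⊓ p`, so `Q` is reached from `N ⧸ p`
    set r : ↥q →ₗ[Λ] N ⧸ p := p.mkQ ∘ₗ q.subtype with hr
    have hker : LinearMap.ker r.rangeRestrict ≤ LinearMap.ker g := by
      intro x hx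
      rw [LinearMap.ker_rangeRestrict, hr, LinearMap.ker_comp,
        Submodule.ker_mkQ] at hx
      have hgx : g x ∈ Submodule.map g (Submodule.comap q.subtype p) := ⟨x, hx, rfl⟩
      rw [hK] at hgx
      rw [LinearMap.mem_ker]
      simpa using hgx
    have hrsurj : Function.Surjective r.rangeRestrict := r.surjective_rangeRestrict
    let e := r.rangeRestrict.quotKerEquivOfSurjective hrsurj
    refine hq2 Q hs ⟨LinearMap.range r,
      ((LinearMap.ker r.rangeRestrict).liftQ g hker) ∘ₗ e.symm.toLinearMap, ?_⟩
    rw [LinearMap.coe_comp, LinearEquiv.coe_coe]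
    refine Function.Surjective.comp ?_ e.symm.surjective
    intro y
    obtain ⟨x, rfl⟩ := hg y
    exact ⟨Submodule.Quotient.mk x, by rw [Submodule.liftQ_apply]⟩
  · -- the image of `q ⊓ p` is all of `Q`, so `Q` is reached from `p`
    refine hq1 Q hs ⟨Submodule.comap p.subtype q,
      g ∘ₗ p.subtype.restrict (p := Submodule.comap p.subtype q) (q := q) (fun x hx => hx), ?_⟩
    rw [LinearMap.coe_comp]
    intro y
    have hy : y ∈ Submodule.map g (Submodule.comap q.subtype p) := by
      rw [hK]; exact Submodule.mem_top
    obtain ⟨x, hxp, rfl⟩ := hy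
    exact ⟨⟨⟨x.1, hxp⟩, x.2⟩, rfl⟩

lemma fih_simple {S : Type} [AddCommGroup S] [Module Λ S] (hs : IsSimpleModule Λ S)
    (h : MemH Λ n (ModuleCat.of Λ S)) : FIH Λ n S := by
  haveI := hs
  haveI : Subsingleton ↥(⊥ : Submodule Λ S) :=
    ⟨fun a b => Subtype.ext (by rw [(Submodule.mem_bot Λ).1 a.2, (Submodule.mem_bot Λ).1 b.2])⟩
  constructor
  · rw [isFiniteLength_iff_isNoetherian_isArtinian]
    exact ⟨inferInstance, inferInstance⟩
  · intro Q _ _ hQ hre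
    obtain ⟨p, f, hf⟩ := hre
    rcases eq_bot_or_eq_top p with rfl | rfl
    · exact (not_simple_of_subsingleton f hf hQ).elim
    · haveI := hQ
      set e0 := Submodule.topEquiv (R := Λ) (M := S) with he0
      set g : S →ₗ[Λ] Q := f ∘ₗ e0.symm.toLinearMap with hgdef
      have hgs : Function.Surjective g := by
        rw [hgdef, LinearMap.coe_comp, LinearEquiv.coe_coe]
        exact hf.comp e0.symm.surjective
      rcases eq_bot_or_eq_top (LinearMap.ker g) with hk | hk
      · exact memH_congr (LinearEquiv.ofBijective g ⟨LinearMap.ker_eq_bot.1 hk, hgs⟩) h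
      · exfalso
        haveI : Subsingleton Q := by
          refine ⟨fun a b => ?_⟩
          obtain ⟨x, rfl⟩ := hgs a
          obtain ⟨y, rfl⟩ := hgs b
          have hx : g x = 0 := by
            have : x ∈ LinearMap.ker g := by rw [hk]; exact Submodule.mem_top
            simpa using this
          have hy : g y = 0 := by
            have : y ∈ LinearMap.ker g := by rw [hk]; exact Submodule.mem_top
            simpa using this
          rw [hx, hy]
        exact false_of_simple_subsingleton hQ

lemma factorsInH_iff {N : Type} [AddCommGroup N] [Module Λ N] :
    FactorsInH Λ n N ↔ FIH Λ n N := by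
  constructor
  · rintro ⟨hlen, hsub⟩
    refine ⟨hlen, ?_⟩
    intro Q _ _ hQ hre
    obtain ⟨p, f, hf⟩ := hre
    haveI := hQ
    have hle : Submodule.map p.subtype (LinearMap.ker f) ≤ p :=
      Submodule.map_subtype_le p (LinearMap.ker f)
    have hcm : Submodule.comap p.subtype (Submodule.map p.subtype (LinearMap.ker f)) =
        LinearMap.ker f :=
      Submodule.comap_map_eq_of_injective p.injective_subtype (LinearMap.ker f)
    let e1 : (↥p ⧸ Submodule.comap p.subtype (Submodule.map p.subtype (LinearMap.ker f)))
        ≃ₗ[Λ] (↥p ⧸ LinearMap.ker f) := Submodule.quotEquivOfEq _ _ hcm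
    let e2 : (↥p ⧸ LinearMap.ker f) ≃ₗ[Λ] Q := f.quotKerEquivOfSurjective hf
    haveI : IsSimpleModule Λ
        (↥p ⧸ Submodule.comap p.subtype (Submodule.map p.subtype (LinearMap.ker f))) :=
      IsSimpleModule.congr (e1.trans e2)
    exact memH_congr (e1.trans e2) (hsub (Submodule.map p.subtype (LinearMap.ker f)) p hle ‹_›)
  · rintro ⟨hlen, hQ⟩
    refine ⟨hlen, ?_⟩
    intro L₁ L₂ h12 hs
    exact hQ _ hs ⟨L₂, (Submodule.comap L₂.subtype L₁).mkQ, Submodule.mkQ_surjective _⟩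

lemma fih_sup {X : Type} [AddCommGroup X] [Module Λ X] {A B : Submodule Λ X}
    (hA : FIH Λ n ↥A) (hB : FIH Λ n ↥B) : FIH Λ n ↥(A ⊔ B) := by
  apply FIH.extension (Submodule.comap (A ⊔ B).subtype A)
  · exact hA.of_injective (Submodule.comapSubtypeEquivOfLe le_sup_left).toLinearMap
      (Submodule.comapSubtypeEquivOfLe le_sup_left).injective
  · apply hB.of_surjective
      ((Submodule.comap (A ⊔ B).subtype A).mkQ ∘ₗ Submodule.inclusion le_sup_right)
    rw [LinearMap.coe_comp]
    intro z
    obtain ⟨x, rfl⟩ := Submodule.mkQ_surjective _ z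
    obtain ⟨a, ha, b, hb, hab⟩ := Submodule.mem_sup.1 x.2
    refine ⟨⟨b, hb⟩, ?_⟩
    show Submodule.Quotient.mk _ = Submodule.Quotient.mk x
    rw [Submodule.Quotient.eq]
    refine Submodule.mem_comap.2 ?_
    have hcoe : ((Submodule.inclusion (le_sup_right : B ≤ A ⊔ B) ⟨b, hb⟩ - x : ↥(A ⊔ B)) : X)
        = b - (x : X) := rfl
    rw [Submodule.subtype_apply, hcoe]
    have hba : b - (x : X) = -a := by rw [← hab]; abel
    rw [hba]
    exact A.neg_mem ha

end Aux

/-- over a semiperfect left Noetherian ring, `t^n` is a radical: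
`t^n(M/t^n(M)) = 0` for every left `Λ`-module `M`. -/
theorem tn_is_radical (Λ : Type) [Ring Λ] [IsNoetherianRing Λ]
    (hsp : IsSemiperfectRing Λ) (n : ℕ) (hn : 0 < n) (M : ModuleCat.{0} Λ) :
    tSub Λ n (↥M ⧸ tSub Λ n ↥M) = ⊥ := by
  classical
  set T := tSub Λ n ↥M with hT
  set s : Set (Submodule Λ ↥M) := {L : Submodule Λ ↥M | FactorsInH Λ n L} with hs
  have hTs : T = sSup s := rfl
  have hdir : DirectedOn (· ≤ ·) s := by
    intro A hA B hB
    refine ⟨A ⊔ B, ?_, le_sup_left, le_sup_right⟩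
    show FactorsInH Λ n ↥(A ⊔ B)
    rw [factorsInH_iff]
    exact fih_sup (factorsInH_iff.1 hA) (factorsInH_iff.1 hB)
  have hne : s.Nonempty := by
    refine ⟨⊥, ?_⟩
    show FactorsInH Λ n ↥(⊥ : Submodule Λ ↥M)
    rw [factorsInH_iff]
    haveI : Subsingleton ↥(⊥ : Submodule Λ ↥M) :=
      ⟨fun a b => Subtype.ext (by rw [(Submodule.mem_bot Λ).1 a.2, (Submodule.mem_bot Λ).1 b.2])⟩
    exact fih_of_subsingleton
  rw [tSub]
  apply sSup_eq_bot.2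
  intro L hL
  have hLf : FactorsInH Λ n ↥L := hL
  rw [eq_bot_iff]
  intro xb hxb
  obtain ⟨x, rfl⟩ := Submodule.mkQ_surjective T xb
  rw [Submodule.mem_bot, Submodule.mkQ_apply, Submodule.Quotient.mk_eq_zero]
  -- it suffices to show that the cyclic module generated by `x` is torsion
  have hspan : Submodule.span Λ {x} ≤ T := by
    rw [hTs]
    apply le_sSup
    show FactorsInH Λ n ↥(Submodule.span Λ {x})
    rw [factorsInH_iff]
    set W := Submodule.span Λ {x} with hW
    haveI : IsNoetherian Λ ↥W :=
      isNoetherian_of_fg_of_noetherian _ (Submodule.fg_span_singleton x)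
    set p := Submodule.comap W.subtype T with hp
    -- `p` corresponds to a finitely generated submodule of `T`
    have hpfg : p.FG := IsNoetherian.noetherian p
    have hVfg : (p.map W.subtype).FG := hpfg.map W.subtype
    have hVT : p.map W.subtype ≤ T := by rintro v ⟨w, hw, rfl⟩; exact hw
    obtain ⟨L₀, hL₀s, hVL₀⟩ :=
      (CompleteLattice.isCompactElement_iff_le_of_directed_sSup_le _ (p.map W.subtype)).1
        ((Submodule.fg_iff_compact _).1 hVfg) s hne hdir (hTs ▸ hVT)
    have hFIHL₀ : FIH Λ n ↥L₀ := factorsInH_iff.1 hL₀s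
    have hFIHV : FIH Λ n ↥(p.map W.subtype) :=
      hFIHL₀.of_injective (Submodule.inclusion hVL₀) (Submodule.inclusion_injective hVL₀)
    have h1 : FIH Λ n ↥p :=
      hFIHV.of_injective (Submodule.equivMapOfInjective W.subtype W.injective_subtype p).toLinearMap
        (Submodule.equivMapOfInjective W.subtype W.injective_subtype p).injective
    -- the quotient `W ⧸ p` embeds into `L`
    set g : ↥W →ₗ[Λ] (↥M ⧸ T) := T.mkQ ∘ₗ W.subtype with hg
    have hkg : LinearMap.ker g = p := by
      rw [hg, LinearMap.ker_comp, Submodule.ker_mkQ]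
    let e : (↥W ⧸ p) ≃ₗ[Λ] ↥(LinearMap.range g) :=
      (Submodule.quotEquivOfEq p (LinearMap.ker g) hkg.symm).trans g.quotKerEquivRange
    have hrange : LinearMap.range g ≤ L := by
      rintro _ ⟨w, rfl⟩
      obtain ⟨c, hc⟩ := Submodule.mem_span_singleton.1 w.2
      have hgw : g w = c • T.mkQ x := by
        rw [hg]
        show T.mkQ (w : ↥M) = c • T.mkQ x
        rw [← hc, map_smul]
      rw [hgw]
      exact L.smul_mem c hxb
    have hFIHrange : FIH Λ n ↥(LinearMap.range g) :=
      (factorsInH_iff.1 hLf).of_injective (Submodule.inclusion hrange)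
        (Submodule.inclusion_injective hrange)
    have h2 : FIH Λ n (↥W ⧸ p) := hFIHrange.of_injective e.toLinearMap e.injective
    exact FIH.extension p h1 h2
  exact hspan (Submodule.mem_span_singleton_self x)

end
end
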